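/- arXiv:1506.09200 — 3 statements merged into one kernel-verified Lean document; each statement's English description precedes it below -/
import Mathlib

section
/- The squared energy dual norm of the residual admits the spectral representation ‖r‖_{a,*}² = Σ_{l=1}^{𝒩} α_l² · ((λ_l − λ_red)/λ_l)² · λ_l. -/
open scoped RealInnerProductSpace

/-- Spectral representation of the squared energy dual norm of the residual:
`‖r‖_{a,*}² = Σ_l α_l² ((λ_l − λ_red)/λ_l)² λ_l`. -/
theorem residual_dual_norm_spectral_representation
    {V : Type*} [NormedAddCommGroup V] [InnerProductSpace ℝ V] [FiniteDimensional ℝ V]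
    {n : ℕ}
    (b : OrthonormalBasis (Fin n) ℝ V)
    (a : V →ₗ[ℝ] V →ₗ[ℝ] ℝ)
    (ha_symm : ∀ v w : V, a v w = a w v)
    (ha_pos : ∀ v : V, v ≠ 0 → 0 < a v v)
    (lam : Fin n → ℝ)
    (hlam_pos : ∀ l, 0 < lam l)
    (hlam_mono : Monotone lam)
    (heig : ∀ (l : Fin n) (v : V), a (b l) v = lam l * ⟪b l, v⟫)
    (lamred : ℝ) (ured : V)
    (hnorm : ⟪ured, ured⟫ = 1)
    (rnorm : ℝ)
    (hrnorm : rnorm = ⨆ v : {w : V // w ≠ 0},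
        (a ured v.1 - lamred * ⟪ured, v.1⟫) / Real.sqrt (a v.1 v.1)) :
    rnorm ^ 2 = ∑ l : Fin n,
      ⟪ured, b l⟫ ^ 2 * ((lam l - lamred) / lam l) ^ 2 * lam l := by
  set α : Fin n → ℝ := fun l => ⟪ured, b l⟫ with hα
  set x : Fin n → ℝ := fun l => α l * (lam l - lamred) with hx
  set T : ℝ := ∑ l, x l ^ 2 / lam l with hT
  have hST : (∑ l : Fin n, α l ^ 2 * ((lam l - lamred) / lam l) ^ 2 * lam l) = T := by
    refine Finset.sum_congr rfl fun l _ => ?_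
    have h0 : lam l ≠ 0 := (hlam_pos l).ne'
    field_simp [hx]
    ring
  rw [hST]
  -- expansion of a
  have hexp : ∀ v w : V, a v w = ∑ l, ⟪b l, v⟫ * (lam l * ⟪b l, w⟫) := by
    intro v w
    conv_lhs => rw [← b.sum_repr v]
    rw [map_sum, LinearMap.sum_apply]
    refine Finset.sum_congr rfl fun l _ => ?_
    rw [map_smul, LinearMap.smul_apply, heig, b.repr_apply_apply, smul_eq_mul]
  -- residual expansion
  have hinner : ∀ v : V, ⟪ured, v⟫ = ∑ l, α l * ⟪b l, v⟫ := by
    intro v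
    conv_lhs => rw [← b.sum_repr ured]
    rw [sum_inner]
    refine Finset.sum_congr rfl fun l _ => ?_
    rw [real_inner_smul_left, b.repr_apply_apply]
    have hc : (inner ℝ (b l) ured : ℝ) = α l := by
      first
      | exact real_inner_comm (b l) ured
      | exact real_inner_comm ured (b l)
    rw [hc]
  have hres : ∀ v : V, a ured v - lamred * ⟪ured, v⟫ = ∑ l, x l * ⟪b l, v⟫ := by
    intro v
    rw [hexp, hinner, Finset.mul_sum, ← Finset.sum_sub_distrib]
    refine Finset.sum_congr rfl fun l _ => ?_
    have : ⟪b l, ured⟫ = α l := real_inner_comm _ _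
    rw [this, hx]
    ring
  have havv : ∀ v : V, a v v = ∑ l, lam l * ⟪b l, v⟫ ^ 2 := by
    intro v
    rw [hexp]
    refine Finset.sum_congr rfl fun l _ => ?_
    ring
  have hT0 : 0 ≤ T := Finset.sum_nonneg fun l _ =>
    div_nonneg (sq_nonneg _) (hlam_pos l).le
  -- upper bound
  have hub : ∀ v : V, v ≠ 0 →
      (a ured v - lamred * ⟪ured, v⟫) / Real.sqrt (a v v) ≤ Real.sqrt T := by
    intro v hv
    have hav : 0 < a v v := ha_pos v hv
    have hsav : 0 < Real.sqrt (a v v) := Real.sqrt_pos.mpr hav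
    rw [div_le_iff₀ hsav]
    have hCS := Finset.sum_mul_sq_le_sq_mul_sq Finset.univ
      (fun l => x l / Real.sqrt (lam l)) (fun l => Real.sqrt (lam l) * ⟪b l, v⟫)
    have h1 : ∀ l : Fin n, x l / Real.sqrt (lam l) * (Real.sqrt (lam l) * ⟪b l, v⟫)
        = x l * ⟪b l, v⟫ := by
      intro l
      have : Real.sqrt (lam l) ≠ 0 := (Real.sqrt_pos.mpr (hlam_pos l)).ne'
      field_simp
    have h2 : ∀ l : Fin n, (x l / Real.sqrt (lam l)) ^ 2 = x l ^ 2 / lam l := by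
      intro l
      rw [div_pow, Real.sq_sqrt (hlam_pos l).le]
    have h3 : ∀ l : Fin n, (Real.sqrt (lam l) * ⟪b l, v⟫) ^ 2 = lam l * ⟪b l, v⟫ ^ 2 := by
      intro l
      rw [mul_pow, Real.sq_sqrt (hlam_pos l).le]
    simp only [h1, h2, h3] at hCS
    have hCS2 : (∑ l, x l * ⟪b l, v⟫) ^ 2 ≤ T * a v v := by
      rw [hT, havv]; exact hCS
    rw [hres, havv]
    calc (∑ l, x l * ⟪b l, v⟫) ≤ |∑ l, x l * ⟪b l, v⟫| := le_abs_self _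
      _ = Real.sqrt ((∑ l, x l * ⟪b l, v⟫) ^ 2) := (Real.sqrt_sq_eq_abs _).symm
      _ ≤ Real.sqrt (T * (∑ l, lam l * ⟪b l, v⟫ ^ 2)) := by
          apply Real.sqrt_le_sqrt
          rw [← havv]; exact hCS2
      _ = Real.sqrt T * Real.sqrt (∑ l, lam l * ⟪b l, v⟫ ^ 2) := Real.sqrt_mul hT0 _
  -- nonempty index type
  have hured : ured ≠ 0 := by
    intro h
    rw [h, inner_zero_left] at hnorm
    norm_num at hnorm
  haveI : Nonempty {w : V // w ≠ 0} := ⟨⟨ured, hured⟩⟩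
  have hbdd : BddAbove (Set.range fun v : {w : V // w ≠ 0} =>
      (a ured v.1 - lamred * ⟪ured, v.1⟫) / Real.sqrt (a v.1 v.1)) := by
    refine ⟨Real.sqrt T, ?_⟩
    rintro y ⟨v, rfl⟩
    exact hub v.1 v.2
  have hle : rnorm ≤ Real.sqrt T := by
    rw [hrnorm]
    exact ciSup_le fun v => hub v.1 v.2
  have hkey : rnorm = Real.sqrt T := by
    rcases eq_or_lt_of_le hT0 with hT0' | hTpos
    · -- T = 0 : residual is identically 0
      have hxz : ∀ l : Fin n, x l = 0 := by
        intro l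
        have := (Finset.sum_eq_zero_iff_of_nonneg
          (fun l _ => div_nonneg (sq_nonneg (x l)) (hlam_pos l).le)).mp hT0'.symm l
          (Finset.mem_univ l)
        have h0 : lam l ≠ 0 := (hlam_pos l).ne'
        have := (div_eq_zero_iff.mp this).resolve_right h0
        exact pow_eq_zero_iff (by norm_num) |>.mp this
      have hzero : (fun v : {w : V // w ≠ 0} =>
          (a ured v.1 - lamred * ⟪ured, v.1⟫) / Real.sqrt (a v.1 v.1)) = fun _ => (0:ℝ) := by
        funext v
        rw [hres]
        simp [hxz]
      rw [hrnorm, hzero, ciSup_const, ← hT0', Real.sqrt_zero]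
    · -- T > 0 : witness
      set c : EuclideanSpace ℝ (Fin n) := WithLp.toLp 2 (fun l => x l / lam l) with hc
      set v₀ : V := b.repr.symm c with hv₀
      have hrepr : ∀ l, ⟪b l, v₀⟫ = x l / lam l := by
        intro l
        rw [← b.repr_apply_apply, hv₀, LinearIsometryEquiv.apply_symm_apply]
      have hres₀ : a ured v₀ - lamred * ⟪ured, v₀⟫ = T := by
        rw [hres, hT]
        refine Finset.sum_congr rfl fun l _ => ?_
        rw [hrepr]
        ring
      have hav₀ : a v₀ v₀ = T := by
        rw [havv, hT]
        refine Finset.sum_congr rfl fun l _ => ?_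
        rw [hrepr]
        have h0 : lam l ≠ 0 := (hlam_pos l).ne'
        field_simp
      have hv₀ne : v₀ ≠ 0 := by
        intro h
        rw [h] at hav₀
        simp at hav₀
        rw [← hav₀] at hTpos
        exact lt_irrefl _ hTpos
      have hval : (a ured v₀ - lamred * ⟪ured, v₀⟫) / Real.sqrt (a v₀ v₀) = Real.sqrt T := by
        rw [hres₀, hav₀, Real.div_sqrt]
      have hge : Real.sqrt T ≤ rnorm := by
        rw [hrnorm, ← hval]
        exact le_ciSup hbdd ⟨v₀, hv₀ne⟩
      exact le_antisymm hle hge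
  rw [hkey, Real.sq_sqrt hT0]
end

section
/- Let 1 ≤ k and q ≥ 1 with k+q−1 < 𝒩, and define d̃ := min over l with k+q−1 < l ≤ 𝒩 of |(λ_l − λ_red)/λ_l|. Then ‖r‖_{a,*}² ≥ d̃² · Σ_{l > k+q−1} α_l² λ_l. -/
open scoped RealInnerProductSpace

/-- Cauchy–Schwarz for a symmetric positive-definite bilinear form. -/
private lemma bilin_cauchy_schwarz {V : Type*} [AddCommGroup V] [Module ℝ V]
    (a : V →ₗ[ℝ] V →ₗ[ℝ] ℝ)
    (ha_symm : ∀ v w : V, a v w = a w v)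
    (ha_pos : ∀ v : V, v ≠ 0 → 0 < a v v)
    (u v : V) : (a u v) ^ 2 ≤ a u u * a v v := by
  have hnn : ∀ x : V, 0 ≤ a x x := by
    intro x
    rcases eq_or_ne x 0 with rfl | h
    · simp
    · exact (ha_pos x h).le
  rcases eq_or_ne v 0 with rfl | hv
  · simp
  · have hq : 0 < a v v := ha_pos v hv
    have key := hnn (u - (a u v / a v v) • v)
    have expand : a (u - (a u v / a v v) • v) (u - (a u v / a v v) • v)
        = a u u - (a u v) ^ 2 / a v v := by
      simp only [map_sub, map_smul, LinearMap.sub_apply, LinearMap.smul_apply, smul_eq_mul]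
      rw [ha_symm v u]
      field_simp
      ring
    rw [expand] at key
    have h2 : 0 ≤ (a u u - (a u v) ^ 2 / a v v) * a v v := mul_nonneg key hq.le
    have h3 : (a u u - (a u v) ^ 2 / a v v) * a v v = a u u * a v v - (a u v) ^ 2 := by
      field_simp
    linarith [h3 ▸ h2]

/-- Lower bound for the squared residual dual norm:
`‖r‖_{a,*}² ≥ d̃² · Σ_{l > k+q−1} α_l² λ_l`. -/
theorem residual_dual_norm_lower_bound
    {V : Type*} [NormedAddCommGroup V] [InnerProductSpace ℝ V] [FiniteDimensional ℝ V]
    {n : ℕ}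
    (b : OrthonormalBasis (Fin n) ℝ V)
    (a : V →ₗ[ℝ] V →ₗ[ℝ] ℝ)
    (ha_symm : ∀ v w : V, a v w = a w v)
    (ha_pos : ∀ v : V, v ≠ 0 → 0 < a v v)
    (lam : Fin n → ℝ)
    (hlam_pos : ∀ l, 0 < lam l)
    (hlam_mono : Monotone lam)
    (heig : ∀ (l : Fin n) (v : V), a (b l) v = lam l * ⟪b l, v⟫)
    (lamred : ℝ) (ured : V)
    (hnorm : ⟪ured, ured⟫ = 1)
    (k q : ℕ) (hk : 1 ≤ k) (hq : 1 ≤ q) (hkq : k + q - 1 < n)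
    (dtil : ℝ)
    (hdtil : dtil =
      ⨅ l : {i : Fin n // k + q - 1 < (i : ℕ) + 1}, |(lam l.1 - lamred) / lam l.1|)
    (rnorm : ℝ)
    (hrnorm : rnorm = ⨆ v : {w : V // w ≠ 0},
        (a ured v.1 - lamred * ⟪ured, v.1⟫) / Real.sqrt (a v.1 v.1)) :
    rnorm ^ 2 ≥ dtil ^ 2 *
      ∑ l ∈ Finset.univ.filter (fun i : Fin n => k + q - 1 < (i : ℕ) + 1),
        ⟪ured, b l⟫ ^ 2 * lam l := by
  classical
  set m := k + q - 1 with hm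
  set α : Fin n → ℝ := fun l => ⟪b l, ured⟫ with hα
  have hured : ured = ∑ l, α l • b l := (b.sum_repr' ured).symm
  -- basic formula for a applied to a combination
  have aform : ∀ (cf : Fin n → ℝ) (v : V),
      a (∑ l, cf l • b l) v = ∑ l, cf l * (lam l * ⟪b l, v⟫) := by
    intro cf v
    rw [map_sum, LinearMap.sum_apply]
    refine Finset.sum_congr rfl fun l _ => ?_
    rw [map_smul, LinearMap.smul_apply, smul_eq_mul, heig]
  have innerform : ∀ (cf : Fin n → ℝ) (i : Fin n),
      ⟪b i, ∑ l, cf l • b l⟫ = cf i := fun cf i =>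
    b.orthonormal.inner_right_fintype cf i
  have innerleft : ∀ v : V, ⟪ured, v⟫ = ∑ l, α l * ⟪b l, v⟫ := by
    intro v
    conv_lhs => rw [hured]
    rw [sum_inner]
    refine Finset.sum_congr rfl fun l _ => ?_
    rw [real_inner_smul_left]
  -- the residual functional
  have rform : ∀ v : V, a ured v - lamred * ⟪ured, v⟫
      = ∑ l, α l * (lam l - lamred) * ⟪b l, v⟫ := by
    intro v
    have h1 : a ured v = ∑ l, α l * (lam l * ⟪b l, v⟫) := by
      conv_lhs => rw [hured]
      rw [aform]
    rw [h1, innerleft, Finset.mul_sum, ← Finset.sum_sub_distrib]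
    refine Finset.sum_congr rfl fun l _ => ?_
    ring
  -- representer of the residual
  set wc : Fin n → ℝ := fun l => α l * ((lam l - lamred) / lam l) with hwc
  set w : V := ∑ l, wc l • b l with hw
  have hwrep : ∀ v : V, a w v = a ured v - lamred * ⟪ured, v⟫ := by
    intro v
    rw [rform, hw, aform]
    refine Finset.sum_congr rfl fun l _ => ?_
    have := (hlam_pos l).ne'
    simp only [hwc]
    field_simp
  -- boundedness of the sup
  have haww : 0 ≤ a w w := by
    rcases eq_or_ne w 0 with h | h
    · rw [h]; simp
    · exact (ha_pos w h).le
  have hbdd : BddAbove (Set.range fun v : {w : V // w ≠ 0} =>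
      (a ured v.1 - lamred * ⟪ured, v.1⟫) / Real.sqrt (a v.1 v.1)) := by
    refine ⟨Real.sqrt (a w w), ?_⟩
    rintro x ⟨⟨v, hv⟩, rfl⟩
    dsimp only
    have havv : 0 < a v v := ha_pos v hv
    have hsq : 0 < Real.sqrt (a v v) := Real.sqrt_pos.mpr havv
    rw [← hwrep v]
    rw [div_le_iff₀ hsq]
    have h1 : (a w v) ^ 2 ≤ a w w * a v v :=
      bilin_cauchy_schwarz a ha_symm ha_pos w v
    have h2 : a w v ≤ Real.sqrt ((a w v) ^ 2) := by
      rw [Real.sqrt_sq_eq_abs]; exact le_abs_self _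
    calc a w v ≤ Real.sqrt ((a w v) ^ 2) := h2
      _ ≤ Real.sqrt (a w w * a v v) := Real.sqrt_le_sqrt h1
      _ = Real.sqrt (a w w) * Real.sqrt (a v v) := Real.sqrt_mul haww _
  -- the test vector
  set c : Fin n → ℝ := fun l => if m < (l : ℕ) + 1 then wc l else 0 with hc
  set v₀ : V := ∑ l, c l • b l with hv₀
  set T : ℝ := ∑ l, c l ^ 2 * lam l with hT
  have hav₀ : a v₀ v₀ = T := by
    rw [hv₀, aform]
    refine Finset.sum_congr rfl fun l _ => ?_
    rw [innerform]
    ring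
  have hrv₀ : a ured v₀ - lamred * ⟪ured, v₀⟫ = T := by
    rw [rform]
    refine Finset.sum_congr rfl fun l _ => ?_
    rw [hv₀, innerform]
    simp only [hc]
    split_ifs with h
    · have := (hlam_pos l).ne'
      simp only [hwc]
      field_simp
    · ring
  have hT0 : 0 ≤ T := Finset.sum_nonneg fun l _ =>
    mul_nonneg (sq_nonneg _) (hlam_pos l).le
  -- dtil bounds
  have hne : Nonempty {i : Fin n // m < (i : ℕ) + 1} :=
    ⟨⟨⟨m, hkq⟩, by simp⟩⟩
  have hdtil0 : 0 ≤ dtil := by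
    rw [hdtil]
    exact Real.iInf_nonneg fun i => abs_nonneg _
  have hdtille : ∀ l : Fin n, m < (l : ℕ) + 1 →
      dtil ≤ |(lam l - lamred) / lam l| := by
    intro l hl
    rw [hdtil]
    have hbb : BddBelow (Set.range fun l : {i : Fin n // m < (i : ℕ) + 1} =>
        |(lam l.1 - lamred) / lam l.1|) := by
      refine ⟨0, ?_⟩
      rintro x ⟨i, rfl⟩
      exact abs_nonneg _
    exact ciInf_le hbb ⟨l, hl⟩
  -- T dominates the RHS sum
  have hTS : dtil ^ 2 *
      (∑ l ∈ Finset.univ.filter (fun i : Fin n => m < (i : ℕ) + 1),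
        ⟪ured, b l⟫ ^ 2 * lam l) ≤ T := by
    rw [Finset.mul_sum, hT]
    rw [← Finset.sum_filter_add_sum_filter_not Finset.univ
      (fun i : Fin n => m < (i : ℕ) + 1) (fun l => c l ^ 2 * lam l)]
    have hrest : 0 ≤ ∑ l ∈ Finset.univ.filter
        (fun i : Fin n => ¬ m < (i : ℕ) + 1), c l ^ 2 * lam l :=
      Finset.sum_nonneg fun l _ => mul_nonneg (sq_nonneg _) (hlam_pos l).le
    have hmain : ∀ l ∈ Finset.univ.filter (fun i : Fin n => m < (i : ℕ) + 1),
        dtil ^ 2 * (⟪ured, b l⟫ ^ 2 * lam l) ≤ c l ^ 2 * lam l := by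
      intro l hl
      rw [Finset.mem_filter] at hl
      have hl' := hl.2
      have hd := hdtille l hl'
      have hcl : c l = α l * ((lam l - lamred) / lam l) := by
        simp only [hc, hl', ite_true, hwc]
      have hsq : dtil ^ 2 ≤ ((lam l - lamred) / lam l) ^ 2 := by
        have : |dtil| ≤ |(lam l - lamred) / lam l| := by
          rwa [abs_of_nonneg hdtil0]
        calc dtil ^ 2 = |dtil| ^ 2 := (sq_abs _).symm
          _ ≤ |(lam l - lamred) / lam l| ^ 2 := by
              exact pow_le_pow_left₀ (abs_nonneg _) this 2
          _ = ((lam l - lamred) / lam l) ^ 2 := sq_abs _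
      have hα2 : ⟪ured, b l⟫ ^ 2 = α l ^ 2 := by
        simp [hα, real_inner_comm]
      rw [hα2, hcl, mul_pow]
      calc dtil ^ 2 * (α l ^ 2 * lam l)
          ≤ ((lam l - lamred) / lam l) ^ 2 * (α l ^ 2 * lam l) := by
            exact mul_le_mul_of_nonneg_right hsq
              (mul_nonneg (sq_nonneg _) (hlam_pos l).le)
        _ = α l ^ 2 * ((lam l - lamred) / lam l) ^ 2 * lam l := by ring
    exact le_add_of_le_of_nonneg (Finset.sum_le_sum hmain) hrest
  -- main case split
  rcases eq_or_lt_of_le hT0 with hTz | hTp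
  · exact hTS.trans (le_of_eq_of_le hTz.symm (sq_nonneg _))
  · have hv₀ne : v₀ ≠ 0 := by
      intro h
      rw [h] at hav₀
      simp at hav₀
      linarith
    have hratio : (a ured v₀ - lamred * ⟪ured, v₀⟫) / Real.sqrt (a v₀ v₀)
        = Real.sqrt T := by
      rw [hrv₀, hav₀, Real.div_sqrt]
    have hle : Real.sqrt T ≤ rnorm := by
      rw [hrnorm]
      exact hratio ▸ le_ciSup hbdd (⟨v₀, hv₀ne⟩ : {w : V // w ≠ 0})
    have hT_le : T ≤ rnorm ^ 2 := by
      calc T = Real.sqrt T ^ 2 := (Real.sq_sqrt hT0).symm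
        _ ≤ rnorm ^ 2 := pow_le_pow_left₀ (Real.sqrt_nonneg _) hle 2
    exact le_trans hTS hT_le
end

section
/- Let 1 ≤ k and q ≥ 1 with k+q−1 ≤ 𝒩, and define d̂ := min over l with (l > k+q−1 or l < k), 1 ≤ l ≤ 𝒩, of |(λ_l − λ_red)/λ_l|; assume d̂ > 0. Let v̄ := Σ_{k ≤ l ≤ k+q−1} α_l u_l be the m-orthogonal projection of u_red onto the eigenspace span{u_k, …, u_{k+q−1}}. Then a(u_red − v̄, u_red − v̄) = Σ_{l > k+q−1 or l < k} α_l² λ_l ≤ ‖r‖_{a,*}² / d̂². -/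
open scoped RealInnerProductSpace

lemma quad_form {V : Type*} [NormedAddCommGroup V] [InnerProductSpace ℝ V]
    {n : ℕ} (b : OrthonormalBasis (Fin n) ℝ V)
    (a : V →ₗ[ℝ] V →ₗ[ℝ] ℝ) (lam : Fin n → ℝ)
    (heig : ∀ (l : Fin n) (v : V), a (b l) v = lam l * ⟪b l, v⟫)
    (f g : Fin n → ℝ) :
    a (∑ l, f l • b l) (∑ l, g l • b l) = ∑ l, f l * g l * lam l := by
  have horth := b.orthonormal
  rw [orthonormal_iff_ite] at horth
  simp only [map_sum, LinearMap.sum_apply, map_smul, LinearMap.smul_apply,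
    smul_eq_mul, heig, inner_sum, real_inner_smul_right, horth, mul_ite,
    mul_one, mul_zero, Finset.sum_ite_eq', Finset.mem_univ, if_true]
  exact Finset.sum_congr rfl (fun l _ => by ring)

lemma inner_form {V : Type*} [NormedAddCommGroup V] [InnerProductSpace ℝ V]
    {n : ℕ} (b : OrthonormalBasis (Fin n) ℝ V) (f g : Fin n → ℝ) :
    ⟪∑ l, f l • b l, ∑ l, g l • b l⟫ = ∑ l, f l * g l := by
  have horth := b.orthonormal
  rw [orthonormal_iff_ite] at horth
  simp only [sum_inner, inner_sum, real_inner_smul_left, real_inner_smul_right,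
    horth, mul_ite, mul_one, mul_zero, Finset.sum_ite_eq', Finset.mem_univ, if_true]
  exact Finset.sum_congr rfl (fun l _ => mul_comm _ _)

/-- Eigenvector error bound (remark after Theorem 1): with `v̄` the `m`-orthogonal
projection of `u_red` onto the eigenspace `span{u_k, …, u_{k+q−1}}`,
`a(u_red − v̄, u_red − v̄) = Σ_{l > k+q−1 ∨ l < k} α_l² λ_l ≤ ‖r‖_{a,*}² / d̂²`. -/
theorem eigenvector_error_bound
    {V : Type*} [NormedAddCommGroup V] [InnerProductSpace ℝ V] [FiniteDimensional ℝ V]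
    {n : ℕ}
    (b : OrthonormalBasis (Fin n) ℝ V)
    (a : V →ₗ[ℝ] V →ₗ[ℝ] ℝ)
    (ha_symm : ∀ v w : V, a v w = a w v)
    (ha_pos : ∀ v : V, v ≠ 0 → 0 < a v v)
    (lam : Fin n → ℝ)
    (hlam_pos : ∀ l, 0 < lam l)
    (hlam_mono : Monotone lam)
    (heig : ∀ (l : Fin n) (v : V), a (b l) v = lam l * ⟪b l, v⟫)
    (lamred : ℝ) (ured : V)
    (hnorm : ⟪ured, ured⟫ = 1)
    (k q : ℕ) (hk : 1 ≤ k) (hq : 1 ≤ q) (hkq : k + q - 1 ≤ n)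
    (dhat : ℝ)
    (hdhat : dhat =
      ⨅ l : {i : Fin n // k + q - 1 < (i : ℕ) + 1 ∨ (i : ℕ) + 1 < k},
        |(lam l.1 - lamred) / lam l.1|)
    (hdhat_pos : 0 < dhat)
    (rnorm : ℝ)
    (hrnorm : rnorm = ⨆ v : {w : V // w ≠ 0},
        (a ured v.1 - lamred * ⟪ured, v.1⟫) / Real.sqrt (a v.1 v.1))
    (vbar : V)
    (hvbar : vbar =
      ∑ l ∈ Finset.univ.filter (fun i : Fin n => k ≤ (i : ℕ) + 1 ∧ (i : ℕ) + 1 ≤ k + q - 1),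
        ⟪ured, b l⟫ • b l) :
    a (ured - vbar) (ured - vbar) =
      (∑ l ∈ Finset.univ.filter
          (fun i : Fin n => k + q - 1 < (i : ℕ) + 1 ∨ (i : ℕ) + 1 < k),
        ⟪ured, b l⟫ ^ 2 * lam l) ∧
    (∑ l ∈ Finset.univ.filter
        (fun i : Fin n => k + q - 1 < (i : ℕ) + 1 ∨ (i : ℕ) + 1 < k),
      ⟪ured, b l⟫ ^ 2 * lam l) ≤ rnorm ^ 2 / dhat ^ 2 := by
  classical
  set α : Fin n → ℝ := fun l => ⟪ured, b l⟫ with hα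
  set Fc : Finset (Fin n) :=
    Finset.univ.filter (fun i : Fin n => k + q - 1 < (i : ℕ) + 1 ∨ (i : ℕ) + 1 < k) with hFc
  set Fk : Finset (Fin n) :=
    Finset.univ.filter (fun i : Fin n => k ≤ (i : ℕ) + 1 ∧ (i : ℕ) + 1 ≤ k + q - 1) with hFk
  have hmemFc : ∀ i : Fin n, i ∈ Fc ↔ (k + q - 1 < (i : ℕ) + 1 ∨ (i : ℕ) + 1 < k) := by
    intro i; simp [hFc]
  have hmemFk : ∀ i : Fin n, i ∈ Fk ↔ ¬ (i ∈ Fc) := by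
    intro i; simp only [hmemFc]; simp [hFk]; omega
  -- coefficients of ured - vbar
  set β : Fin n → ℝ := fun l => if l ∈ Fc then α l else 0 with hβ
  have hured : ured = ∑ l, α l • b l := by
    conv_lhs => rw [← b.sum_repr' ured]
    exact Finset.sum_congr rfl fun l _ => by rw [real_inner_comm]
  have hw : ured - vbar = ∑ l, β l • b l := by
    have h2 : ∑ l, β l • b l = ∑ l ∈ Fc, α l • b l := by
      simp only [hβ, ite_smul, zero_smul, Finset.sum_ite_mem, Finset.univ_inter]
    have h3 : ∑ l ∈ Fk, α l • b l + ∑ l ∈ Fc, α l • b l = ∑ l, α l • b l := by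
      rw [← Finset.sum_filter_add_sum_filter_not Finset.univ (· ∈ Fk) (fun l => α l • b l)]
      congr 1
      · congr 1; ext i; simp
      · congr 1; ext i; simp [hmemFk i]
    have h4 : vbar = ∑ l ∈ Fk, α l • b l := hvbar
    rw [h2, h4, hured, ← h3, add_sub_cancel_left]
  -- the fundamental quadratic identities
  have hquad := quad_form b a lam heig
  have hinner := inner_form b
  -- Part 1
  have part1 : a (ured - vbar) (ured - vbar) = ∑ l ∈ Fc, α l ^ 2 * lam l := by
    rw [hw, hquad β β]
    have : ∀ l : Fin n, β l * β l * lam l = if l ∈ Fc then α l ^ 2 * lam l else 0 := by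
      intro l
      by_cases h : l ∈ Fc
      · simp only [hβ, if_pos h]; ring
      · simp [hβ, h]
    rw [Finset.sum_congr rfl (fun l _ => this l)]
    simp only [Finset.sum_ite_mem, Finset.univ_inter]
  refine ⟨part1, ?_⟩
  -- Part 2
  set S : ℝ := ∑ l ∈ Fc, α l ^ 2 * lam l with hS
  by_cases hzero : ∀ l ∈ Fc, α l = 0
  · have : S = 0 := Finset.sum_eq_zero fun l hl => by rw [hzero l hl]; ring
    rw [this]
    positivity
  push_neg at hzero
  obtain ⟨l0, hl0mem, hl0⟩ := hzero
  -- dhat is a lower bound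
  have hdlb : ∀ i : Fin n, i ∈ Fc → dhat ≤ |(lam i - lamred) / lam i| := by
    intro i hi
    rw [hdhat]
    have hbb : BddBelow (Set.range fun l : {i : Fin n // k + q - 1 < (i : ℕ) + 1 ∨ (i : ℕ) + 1 < k} =>
        |(lam l.1 - lamred) / lam l.1|) := ⟨0, by rintro x ⟨j, rfl⟩; exact abs_nonneg _⟩
    exact ciInf_le hbb ⟨i, (hmemFc i).1 hi⟩
  have hlamne : ∀ i : Fin n, i ∈ Fc → lam i ≠ lamred := by
    intro i hi h
    have := hdlb i hi
    rw [h] at this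
    simp at this
    exact absurd (lt_of_lt_of_le hdhat_pos this) (lt_irrefl 0)
  -- the test vector
  set γ : Fin n → ℝ := fun l => if l ∈ Fc then α l * (lam l - lamred) / lam l else 0 with hγ
  set v0 : V := ∑ l, γ l • b l with hv0
  set T : ℝ := ∑ l ∈ Fc, α l ^ 2 * (lam l - lamred) ^ 2 / lam l with hT
  have hterm_pos : ∀ l ∈ Fc, 0 ≤ α l ^ 2 * (lam l - lamred) ^ 2 / lam l := by
    intro l _
    have := hlam_pos l
    positivity
  have hTpos : 0 < T := by
    refine Finset.sum_pos' hterm_pos ⟨l0, hl0mem, ?_⟩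
    have h1 := hlam_pos l0
    have h2 : lam l0 - lamred ≠ 0 := sub_ne_zero.mpr (hlamne l0 hl0mem)
    positivity
  have hav0 : a v0 v0 = T := by
    rw [hv0, hquad γ γ]
    have : ∀ l : Fin n, γ l * γ l * lam l
        = if l ∈ Fc then α l ^ 2 * (lam l - lamred) ^ 2 / lam l else 0 := by
      intro l
      by_cases h : l ∈ Fc
      · have h0 : lam l ≠ 0 := (hlam_pos l).ne'
        simp only [hγ, if_pos h]
        field_simp
      · simp [hγ, h]
    rw [Finset.sum_congr rfl (fun l _ => this l)]
    simp only [Finset.sum_ite_mem, Finset.univ_inter, hT]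
  have hrv0 : a ured v0 - lamred * ⟪ured, v0⟫ = T := by
    rw [hured, hv0, hquad α γ, hinner α γ, Finset.mul_sum, ← Finset.sum_sub_distrib]
    have : ∀ l : Fin n, α l * γ l * lam l - lamred * (α l * γ l)
        = if l ∈ Fc then α l ^ 2 * (lam l - lamred) ^ 2 / lam l else 0 := by
      intro l
      by_cases h : l ∈ Fc
      · have h0 : lam l ≠ 0 := (hlam_pos l).ne'
        simp only [hγ, if_pos h]
        field_simp
      · simp [hγ, h]
    rw [Finset.sum_congr rfl (fun l _ => this l)]
    simp only [Finset.sum_ite_mem, Finset.univ_inter, hT]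
  have hv0ne : v0 ≠ 0 := by
    intro h
    rw [h] at hav0
    simp at hav0
    linarith
  -- bounded above
  set C : ℝ := Real.sqrt (∑ l, (α l * (lam l - lamred)) ^ 2 / lam l) with hC
  have hbdd : BddAbove (Set.range fun v : {w : V // w ≠ 0} =>
      (a ured v.1 - lamred * ⟪ured, v.1⟫) / Real.sqrt (a v.1 v.1)) := by
    refine ⟨C, ?_⟩
    rintro x ⟨⟨v, hv⟩, rfl⟩
    set g : Fin n → ℝ := fun l => ⟪b l, v⟫ with hg
    have hvrepr : v = ∑ l, g l • b l := (b.sum_repr' v).symm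
    have havv : a v v = ∑ l, g l ^ 2 * lam l := by
      rw [hvrepr, hquad g g]
      exact Finset.sum_congr rfl fun l _ => by ring
    have havvpos : 0 < a v v := ha_pos v hv
    have hrv : a ured v - lamred * ⟪ured, v⟫
        = ∑ l, (α l * (lam l - lamred) / Real.sqrt (lam l)) * (g l * Real.sqrt (lam l)) := by
      rw [hured, hvrepr, hquad α g, hinner α g, Finset.mul_sum, ← Finset.sum_sub_distrib]
      refine Finset.sum_congr rfl fun l _ => ?_
      have h1 := hlam_pos l
      have h2 : Real.sqrt (lam l) ≠ 0 := by positivity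
      have h4 : α l * (lam l - lamred) / Real.sqrt (lam l) * (g l * Real.sqrt (lam l))
          = α l * (lam l - lamred) * g l := by
        field_simp
      rw [h4]
      ring
    have hX : (0:ℝ) ≤ ∑ l, (α l * (lam l - lamred)) ^ 2 / lam l :=
      Finset.sum_nonneg fun l _ => div_nonneg (sq_nonneg _) (hlam_pos l).le
    have hCS : (a ured v - lamred * ⟪ured, v⟫) ^ 2
        ≤ (∑ l, (α l * (lam l - lamred)) ^ 2 / lam l) * a v v := by
      rw [hrv, havv]
      refine le_trans (Finset.sum_mul_sq_le_sq_mul_sq Finset.univ _ _) (le_of_eq ?_)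
      congr 1
      · refine Finset.sum_congr rfl fun l _ => ?_
        rw [div_pow, Real.sq_sqrt (hlam_pos l).le]
      · refine Finset.sum_congr rfl fun l _ => ?_
        rw [mul_pow, Real.sq_sqrt (hlam_pos l).le]
    have hsq : 0 < Real.sqrt (a v v) := Real.sqrt_pos.mpr havvpos
    rw [div_le_iff₀ hsq]
    have h5 : a ured v - lamred * ⟪ured, v⟫
        ≤ Real.sqrt ((∑ l, (α l * (lam l - lamred)) ^ 2 / lam l) * a v v) := by
      refine le_trans (le_abs_self _) ?_
      rw [← Real.sqrt_sq_eq_abs]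
      exact Real.sqrt_le_sqrt hCS
    rwa [Real.sqrt_mul hX] at h5
  -- lower bound on rnorm via the test vector
  have hrn_ge : Real.sqrt T ≤ rnorm := by
    rw [hrnorm]
    have h6 := le_ciSup hbdd (⟨v0, hv0ne⟩ : {w : V // w ≠ 0})
    refine le_trans (le_of_eq ?_) h6
    show Real.sqrt T = (a ured v0 - lamred * ⟪ured, v0⟫) / Real.sqrt (a v0 v0)
    rw [hrv0, hav0, Real.div_sqrt]
  have hT_le : T ≤ rnorm ^ 2 := by
    have h7 := pow_le_pow_left₀ (Real.sqrt_nonneg T) hrn_ge 2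
    rwa [Real.sq_sqrt hTpos.le] at h7
  have hdS : dhat ^ 2 * S ≤ T := by
    rw [hS, hT, Finset.mul_sum]
    refine Finset.sum_le_sum fun l hl => ?_
    have h1 := hlam_pos l
    have h2 := hdlb l hl
    have h3 : dhat ^ 2 ≤ ((lam l - lamred) / lam l) ^ 2 := by
      rw [← sq_abs ((lam l - lamred) / lam l)]
      exact pow_le_pow_left₀ hdhat_pos.le h2 2
    calc dhat ^ 2 * (α l ^ 2 * lam l)
        ≤ ((lam l - lamred) / lam l) ^ 2 * (α l ^ 2 * lam l) :=
          mul_le_mul_of_nonneg_right h3 (by positivity)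
      _ = α l ^ 2 * (lam l - lamred) ^ 2 / lam l := by
          have h0 : lam l ≠ 0 := h1.ne'
          field_simp
  rw [le_div_iff₀ (by positivity : (0:ℝ) < dhat ^ 2)]
  calc S * dhat ^ 2 = dhat ^ 2 * S := mul_comm _ _
    _ ≤ T := hdS
    _ ≤ rnorm ^ 2 := hT_le
end
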